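/- arXiv:1909.08683 — 8 statements merged into one kernel-verified Lean document; each statement's English description precedes it below -/
import Mathlib

section
/- Let E = Q ×_{φ,ψ,θ} A be a central extension which is a latin quandle. Then E is medial if and only if φ(θ(a,b)) + ψ(θ(c,d)) + θ(a*b, c*d) = φ(θ(a,c)) + ψ(θ(b,d)) + θ(a*c, b*d) for all a,b,c,d ∈ Q, assuming Q itself is medial. -/
theorem central_extension_medial_iff {Q : Type*} {A : Type*} [AddCommGroup A]
    (q : Q → Q → Q)
    (hidem : ∀ a, q a a = a)
    (hld : ∀ a b c, q a (q b c) = q (q a b) (q a c))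
    (hlbij : ∀ a, Function.Bijective (fun x => q a x))
    (hrbij : ∀ a, Function.Bijective (fun x => q x a))
    (hmedial : ∀ a b c d, q (q a b) (q c d) = q (q a c) (q b d))
    (φ ψ : A ≃+ A) (θ : Q → Q → A)
    (ext : Q × A → Q × A → Q × A)
    (hext : ∀ p r : Q × A, ext p r = (q p.1 r.1, φ p.2 + ψ r.2 + θ p.1 r.1))
    (hsum : ∀ x : A, φ x + ψ x = x)
    (hθdiag : ∀ a, θ a a = 0)
    (hLD : ∀ a b c, ψ (θ b c) + θ a (q b c) = ψ (θ a c) + φ (θ a b) + θ (q a b) (q a c)) :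
    (∀ p r s t : Q × A, ext (ext p r) (ext s t) = ext (ext p s) (ext r t)) ↔
    (∀ a b c d, φ (θ a b) + ψ (θ c d) + θ (q a b) (q c d)
        = φ (θ a c) + ψ (θ b d) + θ (q a c) (q b d)) := by
  have hψ : ∀ x : A, ψ x = x - φ x := fun x => eq_sub_of_add_eq' (hsum x)
  constructor
  · intro h a b c d
    have := congrArg Prod.snd (h (a, 0) (b, 0) (c, 0) (d, 0))
    simpa [hext] using this
  · rintro h ⟨a, w⟩ ⟨b, x⟩ ⟨c, y⟩ ⟨d, z⟩
    have H := h a b c d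
    simp only [hext]
    refine Prod.ext (hmedial a b c d) ?_
    simp only [map_add, map_sub, hψ] at H ⊢
    abel_nf at H ⊢
    linear_combination (norm := abel1) H
end

section
/- Let O be an Onoi ring and σ a permutation of {1,...,n}. Then O^σ = (Oⁿ, +, ·_σ, α) with coordinatewise addition and α, and multiplication (a₁,...,aₙ)·_σ(b₁,...,bₙ) = (a_{σ(1)}·b₁, ..., a_{σ(n)}·bₙ), is again an Onoi ring. -/
structure OnoiRing (O : Type*) [AddCommGroup O] where
  mul : O → O → O
  α : O ≃+ O
  left_distrib : ∀ a b c, mul a (b + c) = mul a b + mul a c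
  right_distrib : ∀ a b c, mul (a + b) c = mul a c + mul b c
  char2 : ∀ a : O, a + a = 0
  α_mul : ∀ a b, α (mul a b) = mul (α a) (α b)
  α_sq : ∀ a, α (α a) + α a + a = 0
  mul_α : ∀ a b, mul (α a) b = mul a (α b)

theorem onoi_perm_power {O : Type*} [AddCommGroup O] (R : OnoiRing O)
    (n : ℕ) (σ : Equiv.Perm (Fin n)) :
    ∃ S : OnoiRing (Fin n → O),
      (∀ a b : Fin n → O, ∀ i, S.mul a b i = R.mul (a (σ i)) (b i)) ∧
      (∀ a : Fin n → O, ∀ i, S.α a i = R.α (a i)) := by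
  refine ⟨{
    mul := fun a b i => R.mul (a (σ i)) (b i)
    α := { toFun := fun a i => R.α (a i)
           invFun := fun a i => R.α.symm (a i)
           left_inv := fun a => by ext i; simp
           right_inv := fun a => by ext i; simp
           map_add' := fun a b => by ext i; simp }
    left_distrib := fun a b c => by ext i; simp [R.left_distrib]
    right_distrib := fun a b c => by ext i; simp [R.right_distrib]
    char2 := fun a => by ext i; simp [R.char2]
    α_mul := fun a b => by ext i; simp [R.α_mul]
    α_sq := fun a => by ext i; simpa using R.α_sq (a i)
    mul_α := fun a b => by ext i; simp [R.mul_α] }, fun a b i => rfl, fun a i => rfl⟩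
end

section
/- Let O be an Onoi ring and σ a permutation of {1,...,n}×{1,...,n}. Then the set of n×n matrices over O with entrywise addition, α applied entrywise, and multiplication (a_{i,j})·_σ(b_{i,j}) = (Σ_{k=1}^n a_{σ(i,k)}·b_{k,j})_{i,j}, is an Onoi ring. -/
theorem onoi_matrix_ring {O : Type*} [AddCommGroup O] (R : OnoiRing O)
    (n : ℕ) (σ : Equiv.Perm (Fin n × Fin n)) :
    ∃ S : OnoiRing (Fin n → Fin n → O),
      (∀ a b : Fin n → Fin n → O, ∀ i j,
        S.mul a b i j = ∑ k : Fin n, R.mul (a (σ (i, k)).1 (σ (i, k)).2) (b k j)) ∧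
      (∀ a : Fin n → Fin n → O, ∀ i j, S.α a i j = R.α (a i j)) := by
  refine ⟨{
    mul := fun a b i j => ∑ k : Fin n, R.mul (a (σ (i, k)).1 (σ (i, k)).2) (b k j)
    α := AddEquiv.piCongrRight fun _ => AddEquiv.piCongrRight fun _ => R.α
    left_distrib := ?_
    right_distrib := ?_
    char2 := ?_
    α_mul := ?_
    α_sq := ?_
    mul_α := ?_ }, fun a b i j => rfl, fun a i j => rfl⟩
  · intro a b c; funext i j
    simp [R.left_distrib, Finset.sum_add_distrib]
  · intro a b c; funext i j
    simp [R.right_distrib, Finset.sum_add_distrib]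
  · intro a; funext i j
    simp [R.char2]
  · intro a b; funext i j
    simp [AddEquiv.piCongrRight_apply, map_sum, R.α_mul]
  · intro a; funext i j
    simpa using R.α_sq (a i j)
  · intro a b; funext i j
    simp [AddEquiv.piCongrRight_apply, R.mul_α]
end

section
/- Let O₁, O₂ be Onoi rings and μ : O₁³ → O₂ an Onoi mapping. Define θ(a,b) = μ(a, a+b, a+b). Then θ satisfies θ(a,a)=0 and the left-distributivity cocycle condition α₂(θ(b,c)) + θ(a, b*c) = α₂(θ(a,c)) + α₂²(θ(a,b)) + θ(a*b, a*c) for all a,b,c ∈ O₁, where a*b = α₁²(a) + α₁(b). -/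
theorem onoi_mapping_cocycle {O₁ O₂ : Type*} [AddCommGroup O₁] [AddCommGroup O₂]
    (R₁ : OnoiRing O₁) (R₂ : OnoiRing O₂) (μ : O₁ → O₁ → O₁ → O₂)
    (hlin₁ : ∀ a₁ a₂ b c, μ (a₁ + a₂) b c = μ a₁ b c + μ a₂ b c)
    (hlin₂ : ∀ a b₁ b₂ c, μ a (b₁ + b₂) c = μ a b₁ c + μ a b₂ c)
    (hlin₃ : ∀ a b c₁ c₂, μ a b (c₁ + c₂) = μ a b c₁ + μ a b c₂)
    (hOM1 : ∀ a b c, μ (R₁.α a) (R₁.α b) (R₁.α c) = R₂.α (μ a b c))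
    (hOM2 : ∀ a b c, μ (R₁.α a) b c = μ a (R₁.α b) (R₁.α c))
    (hOM3 : ∀ a b c, μ a (R₁.α b) c = μ a b (R₁.α c))
    (θ : O₁ → O₁ → O₂) (hθ : ∀ a b, θ a b = μ a (a + b) (a + b))
    (star : O₁ → O₁ → O₁) (hstar : ∀ a b, star a b = R₁.α (R₁.α a) + R₁.α b) :
    (∀ a, θ a a = 0) ∧
    (∀ a b c, R₂.α (θ b c) + θ a (star b c)
        = R₂.α (θ a c) + R₂.α (R₂.α (θ a b)) + θ (star a b) (star a c)) := by
  have neg₁ : ∀ x : O₁, -x = x := fun x => neg_eq_of_add_eq_zero_left (R₁.char2 x)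
  have A1 : ∀ x : O₁, R₁.α (R₁.α x) = R₁.α x + x := by
    intro x
    have h := R₁.α_sq x
    rw [add_assoc] at h
    rw [eq_neg_of_add_eq_zero_left h, neg₁]
  have z3 : ∀ a b, μ a b 0 = 0 := by
    intro a b
    have h := hlin₃ a b 0 0
    rw [add_zero] at h
    exact (left_eq_add.mp h)
  -- normal form lemmas
  have L2 : ∀ x y z, μ x (R₁.α y) z = μ x y (R₁.α z) := hOM3
  have L1 : ∀ x y z, μ (R₁.α x) y z = μ x y (R₁.α z) + μ x y z := by
    intro x y z
    rw [hOM2, hOM3, A1 z, hlin₃]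
  letI : Module (ZMod 2) O₂ :=
    AddCommGroup.zmodModule (by intro x; rw [two_nsmul]; exact R₂.char2 x)
  have key : ∀ x y : O₂, (1 : ZMod 2) • x = (1 : ZMod 2) • y → x = y := by
    intro x y h; simpa using h
  have L4 : ∀ x y z, R₂.α (μ x y z) = μ x y (R₁.α z) := by
    intro x y z
    rw [← hOM1 x y z]
    simp only [hOM2, hOM3, A1, map_add, hlin₂, hlin₃]
    apply key
    match_scalars <;> decide
  constructor
  · intro a
    simp [hθ, R₁.char2, z3]
  · intro a b c
    simp only [hθ, hstar, A1, map_add, hlin₁, hlin₂, hlin₃, L1, L2, L4]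
    apply key
    match_scalars <;> decide
end

section
/- Let O₁, O₂ be Onoi rings, μ : O₁³ → O₂ an Onoi mapping, and θ(a,b) = μ(a,a+b,a+b). If μ satisfies μ(a,b,b) = μ(b,a,a) and μ(a,b,c) = μ(a,c,b) for all a,b,c ∈ O₁, then θ satisfies the mediality cocycle condition α₂²(θ(a,b)) + α₂(θ(c,d)) + θ(a*b, c*d) = α₂²(θ(a,c)) + α₂(θ(b,d)) + θ(a*c, b*d) for all a,b,c,d ∈ O₁, where a*b = α₁²(a)+α₁(b). -/
theorem onoi_mapping_mediality_sufficient {O₁ O₂ : Type*} [AddCommGroup O₁] [AddCommGroup O₂]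
    (R₁ : OnoiRing O₁) (R₂ : OnoiRing O₂) (μ : O₁ → O₁ → O₁ → O₂)
    (hlin₁ : ∀ a₁ a₂ b c, μ (a₁ + a₂) b c = μ a₁ b c + μ a₂ b c)
    (hlin₂ : ∀ a b₁ b₂ c, μ a (b₁ + b₂) c = μ a b₁ c + μ a b₂ c)
    (hlin₃ : ∀ a b c₁ c₂, μ a b (c₁ + c₂) = μ a b c₁ + μ a b c₂)
    (hOM1 : ∀ a b c, μ (R₁.α a) (R₁.α b) (R₁.α c) = R₂.α (μ a b c))
    (hOM2 : ∀ a b c, μ (R₁.α a) b c = μ a (R₁.α b) (R₁.α c))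
    (hOM3 : ∀ a b c, μ a (R₁.α b) c = μ a b (R₁.α c))
    (θ : O₁ → O₁ → O₂) (hθ : ∀ a b, θ a b = μ a (a + b) (a + b))
    (star : O₁ → O₁ → O₁) (hstar : ∀ a b, star a b = R₁.α (R₁.α a) + R₁.α b)
    (hμ1 : ∀ a b, μ a b b = μ b a a)
    (hμ2 : ∀ a b c, μ a b c = μ a c b) :
    ∀ a b c d, R₂.α (R₂.α (θ a b)) + R₂.α (θ c d) + θ (star a b) (star c d)
      = R₂.α (R₂.α (θ a c)) + R₂.α (θ b d) + θ (star a c) (star b d) := by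
  set A := R₁.α with hA
  set B := R₂.α with hB
  -- char 2 helpers
  have h2 : ∀ x : O₂, x + x = 0 := R₂.char2
  have hneg : ∀ x : O₁, -x = x := by
    intro x; rw [neg_eq_iff_add_eq_zero]; exact R₁.char2 x
  -- α² = α + 1
  have hA2 : ∀ x : O₁, A (A x) = A x + x := by
    intro x
    have h := R₁.α_sq x
    rw [add_assoc, add_eq_zero_iff_eq_neg, hneg] at h
    exact h
  -- α³ = 1
  have hA3 : ∀ x : O₁, A (A (A x)) = x := by
    intro x
    rw [hA2 (A x), hA2 x, add_right_comm, R₁.char2, zero_add]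
  -- second+third slot expansion
  have hg2 : ∀ u p q, μ u (p + q) (p + q) = μ u p p + μ u q q := by
    intro u p q
    rw [hlin₂, hlin₃, hlin₃, hμ2 u p q]
    rw [add_assoc, ← add_assoc (μ u q p), h2, zero_add]
  -- diagonal additivity
  have hsss : ∀ u v, μ (u + v) (u + v) (u + v) = μ u u u + μ v v v := by
    intro u v
    rw [hlin₁, hg2, hg2, hμ1 u v]
    rw [add_assoc, ← add_assoc (μ v u u), h2, zero_add]
  -- θ in simplified form
  have hθ' : ∀ x y, θ x y = μ x x x + μ x y y := by
    intro x y; rw [hθ, hg2]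
  -- moving α's around
  have hA1 : ∀ u v, μ (A u) (A v) (A v) = B (μ u v v) := fun u v => hOM1 u v v
  have hAA : ∀ u v, μ (A (A u)) (A (A v)) (A (A v)) = B (B (μ u v v)) := by
    intro u v; rw [hOM1, hOM1]
  have h7 : ∀ x y, μ (A (A x)) (A y) (A y) = B (μ x y (A y)) + B (μ x y y) := by
    intro x y
    rw [hOM2, hOM1, hOM3, hA2 y, hlin₃, map_add]
  have h8 : ∀ x y, μ (A y) (A (A x)) (A (A x)) = μ y x x := by
    intro x y
    rw [hOM2, hA3]
  -- key expansion of θ (star x y) (star z w)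
  have key : ∀ x y z w, θ (star x y) (star z w)
      = B (B (μ x x x)) + B (μ y y y)
        + (B (B (μ x z z)) + (B (μ x w (A w)) + B (μ x w w))
          + (μ y z z + B (μ y w w))) := by
    intro x y z w
    rw [hθ', hstar, hstar, hsss, hlin₁, hg2, hg2]
    rw [hAA, hAA, h7, h8, hA1, hA1]
  intro a b c d
  rw [key a b c d, key a c b d, hθ' a b, hθ' c d, hθ' a c, hθ' b d,
    map_add, map_add, map_add, map_add, map_add, map_add, hμ1 b c]
  abel
end

section
/- Let O₁, O₂ be Onoi rings, μ : O₁³ → O₂ an Onoi mapping, and θ(a,b) = μ(a,a+b,a+b). If θ satisfies the mediality cocycle condition α₂²(θ(a,b)) + α₂(θ(c,d)) + θ(a*b, c*d) = α₂²(θ(a,c)) + α₂(θ(b,d)) + θ(a*c, b*d) for all a,b,c,d, then μ satisfies μ(a,b,b) = μ(b,a,a) and μ(a,b,c) = μ(a,c,b) for all a,b,c ∈ O₁. -/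
theorem onoi_mapping_mediality_necessary {O₁ O₂ : Type*} [AddCommGroup O₁] [AddCommGroup O₂]
    (R₁ : OnoiRing O₁) (R₂ : OnoiRing O₂) (μ : O₁ → O₁ → O₁ → O₂)
    (hlin₁ : ∀ a₁ a₂ b c, μ (a₁ + a₂) b c = μ a₁ b c + μ a₂ b c)
    (hlin₂ : ∀ a b₁ b₂ c, μ a (b₁ + b₂) c = μ a b₁ c + μ a b₂ c)
    (hlin₃ : ∀ a b c₁ c₂, μ a b (c₁ + c₂) = μ a b c₁ + μ a b c₂)
    (hOM1 : ∀ a b c, μ (R₁.α a) (R₁.α b) (R₁.α c) = R₂.α (μ a b c))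
    (hOM2 : ∀ a b c, μ (R₁.α a) b c = μ a (R₁.α b) (R₁.α c))
    (hOM3 : ∀ a b c, μ a (R₁.α b) c = μ a b (R₁.α c))
    (θ : O₁ → O₁ → O₂) (hθ : ∀ a b, θ a b = μ a (a + b) (a + b))
    (star : O₁ → O₁ → O₁) (hstar : ∀ a b, star a b = R₁.α (R₁.α a) + R₁.α b)
    (hM : ∀ a b c d, R₂.α (R₂.α (θ a b)) + R₂.α (θ c d) + θ (star a b) (star c d)
      = R₂.α (R₂.α (θ a c)) + R₂.α (θ b d) + θ (star a c) (star b d)) :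
    (∀ a b, μ a b b = μ b a a) ∧ (∀ a b c, μ a b c = μ a c b) := by
  -- basic char-2 facts
  have heqz : ∀ x y : O₂, x + y = 0 → x = y := by
    intro x y h
    have h1 : x = -y := eq_neg_of_add_eq_zero_left h
    rw [h1, neg_eq_of_add_eq_zero_left (R₂.char2 y)]
  have hneg2 : ∀ x : O₂, -x = x := fun x => neg_eq_of_add_eq_zero_left (R₂.char2 x)
  have hcc : ∀ x y : O₂, x + (x + y) = y := by
    intro x y; rw [← add_assoc, R₂.char2, zero_add]
  have hA2 : ∀ x, R₁.α (R₁.α x) = R₁.α x + x := by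
    intro x
    have h : R₁.α (R₁.α x) + (R₁.α x + x) = 0 := by
      rw [← add_assoc]; exact R₁.α_sq x
    have h1 : R₁.α (R₁.α x) = -(R₁.α x + x) := eq_neg_of_add_eq_zero_left h
    rw [h1, neg_eq_of_add_eq_zero_left (R₁.char2 (R₁.α x + x))]
  have hB2 : ∀ x, R₂.α (R₂.α x) = R₂.α x + x := by
    intro x
    have h : R₂.α (R₂.α x) + (R₂.α x + x) = 0 := by
      rw [← add_assoc]; exact R₂.α_sq x
    have h1 : R₂.α (R₂.α x) = -(R₂.α x + x) := eq_neg_of_add_eq_zero_left h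
    rw [h1, neg_eq_of_add_eq_zero_left (R₂.char2 (R₂.α x + x))]
  have hA3 : ∀ x, R₁.α (R₁.α (R₁.α x)) = x := by
    intro x
    rw [hA2 (R₁.α x), hA2 x, add_comm (R₁.α x) x, add_assoc, R₁.char2, add_zero]
  -- zero lemmas
  have z1 : ∀ y z, μ 0 y z = 0 := by
    intro y z
    have h := hlin₁ 0 0 y z
    rw [add_zero] at h
    exact (left_eq_add.mp h)
  have z2 : ∀ x z, μ x 0 z = 0 := by
    intro x z
    have h := hlin₂ x 0 0 z
    rw [add_zero] at h
    exact (left_eq_add.mp h)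
  have z3 : ∀ x y, μ x y 0 = 0 := by
    intro x y
    have h := hlin₃ x y 0 0
    rw [add_zero] at h
    exact (left_eq_add.mp h)
  -- normalization lemmas
  have L3 : ∀ x y z, R₂.α (μ x y z) = μ x y (R₁.α z) := by
    intro x y z
    rw [← hOM1, hOM2, hOM3, hA3, hOM3]
  have L1 : ∀ x y z, μ (R₁.α x) y z = μ x y (R₁.α z) + μ x y z := by
    intro x y z
    rw [hOM2, hOM3, hA2, hlin₃]
  -- even smul killers
  have ev2 : ∀ x : O₂, (2:ℤ) • x = 0 := by
    intro x; rw [two_zsmul]; exact R₂.char2 x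
  have evE : ∀ (n : ℤ) (x : O₂), (2 * n) • x = 0 := by
    intro n x; rw [mul_smul, ev2]
  have ev2 : ∀ x : O₂, (2:ℤ) • x = 0 := fun x => by
    rw [(by norm_num : (2:ℤ) = 2 * (1))]; exact evE (1) x
  have evn2 : ∀ x : O₂, (-2:ℤ) • x = 0 := fun x => by
    rw [(by norm_num : (-2:ℤ) = 2 * (-1))]; exact evE (-1) x
  have ev4 : ∀ x : O₂, (4:ℤ) • x = 0 := fun x => by
    rw [(by norm_num : (4:ℤ) = 2 * (2))]; exact evE (2) x
  have evn4 : ∀ x : O₂, (-4:ℤ) • x = 0 := fun x => by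
    rw [(by norm_num : (-4:ℤ) = 2 * (-2))]; exact evE (-2) x
  have ev6 : ∀ x : O₂, (6:ℤ) • x = 0 := fun x => by
    rw [(by norm_num : (6:ℤ) = 2 * (3))]; exact evE (3) x
  have evn6 : ∀ x : O₂, (-6:ℤ) • x = 0 := fun x => by
    rw [(by norm_num : (-6:ℤ) = 2 * (-3))]; exact evE (-3) x
  have ev8 : ∀ x : O₂, (8:ℤ) • x = 0 := fun x => by
    rw [(by norm_num : (8:ℤ) = 2 * (4))]; exact evE (4) x
  have evn8 : ∀ x : O₂, (-8:ℤ) • x = 0 := fun x => by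
    rw [(by norm_num : (-8:ℤ) = 2 * (-4))]; exact evE (-4) x
  have ev10 : ∀ x : O₂, (10:ℤ) • x = 0 := fun x => by
    rw [(by norm_num : (10:ℤ) = 2 * (5))]; exact evE (5) x
  have evn10 : ∀ x : O₂, (-10:ℤ) • x = 0 := fun x => by
    rw [(by norm_num : (-10:ℤ) = 2 * (-5))]; exact evE (-5) x
  have ev12 : ∀ x : O₂, (12:ℤ) • x = 0 := fun x => by
    rw [(by norm_num : (12:ℤ) = 2 * (6))]; exact evE (6) x
  have evn12 : ∀ x : O₂, (-12:ℤ) • x = 0 := fun x => by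
    rw [(by norm_num : (-12:ℤ) = 2 * (-6))]; exact evE (-6) x
  have ev14 : ∀ x : O₂, (14:ℤ) • x = 0 := fun x => by
    rw [(by norm_num : (14:ℤ) = 2 * (7))]; exact evE (7) x
  have evn14 : ∀ x : O₂, (-14:ℤ) • x = 0 := fun x => by
    rw [(by norm_num : (-14:ℤ) = 2 * (-7))]; exact evE (-7) x
  have ev16 : ∀ x : O₂, (16:ℤ) • x = 0 := fun x => by
    rw [(by norm_num : (16:ℤ) = 2 * (8))]; exact evE (8) x
  have evn16 : ∀ x : O₂, (-16:ℤ) • x = 0 := fun x => by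
    rw [(by norm_num : (-16:ℤ) = 2 * (-8))]; exact evE (-8) x
  have ev18 : ∀ x : O₂, (18:ℤ) • x = 0 := fun x => by
    rw [(by norm_num : (18:ℤ) = 2 * (9))]; exact evE (9) x
  have evn18 : ∀ x : O₂, (-18:ℤ) • x = 0 := fun x => by
    rw [(by norm_num : (-18:ℤ) = 2 * (-9))]; exact evE (-9) x
  have ev20 : ∀ x : O₂, (20:ℤ) • x = 0 := fun x => by
    rw [(by norm_num : (20:ℤ) = 2 * (10))]; exact evE (10) x
  have evn20 : ∀ x : O₂, (-20:ℤ) • x = 0 := fun x => by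
    rw [(by norm_num : (-20:ℤ) = 2 * (-10))]; exact evE (-10) x
  have ev22 : ∀ x : O₂, (22:ℤ) • x = 0 := fun x => by
    rw [(by norm_num : (22:ℤ) = 2 * (11))]; exact evE (11) x
  have evn22 : ∀ x : O₂, (-22:ℤ) • x = 0 := fun x => by
    rw [(by norm_num : (-22:ℤ) = 2 * (-11))]; exact evE (-11) x
  have ev24 : ∀ x : O₂, (24:ℤ) • x = 0 := fun x => by
    rw [(by norm_num : (24:ℤ) = 2 * (12))]; exact evE (12) x
  have evn24 : ∀ x : O₂, (-24:ℤ) • x = 0 := fun x => by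
    rw [(by norm_num : (-24:ℤ) = 2 * (-12))]; exact evE (-12) x
  have fix0 : ∀ x : O₂, R₂.α x + x = 0 → x = 0 := by
    intro x h
    have h2 := hB2 x
    have h3 : R₂.α (R₂.α x) = 0 := h2.trans h
    have h4 : R₂.α x = 0 := (AddEquiv.map_eq_zero_iff _).mp h3
    rw [h4, zero_add] at h
    exact h
  -- E1 from hM a b 0 0
  have hE1 : ∀ a b, μ a a (R₁.α b) + μ a b (R₁.α a) + μ a b b + μ b a a
      + (μ b a (R₁.α b) + μ b a b) + (μ b b (R₁.α a) + μ b b a) = 0 := by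
    intro a b
    have e1 := hM a b 0 0
    simp only [hθ, hstar, map_zero, add_zero, zero_add, map_add, hA2, hlin₁, hlin₂, hlin₃,
      hOM3, L1, L3, z1, z2, z3] at e1
    rw [← sub_eq_zero] at e1
    rw [← e1, ← sub_eq_zero]
    abel_nf
    simp only [ev2, evn2, ev4, evn4, ev6, evn6, ev8, evn8, ev10, evn10, ev12, evn12, ev14, evn14, ev16, evn16, ev18, evn18, ev20, evn20, ev22, evn22, ev24, evn24, neg_zero, add_zero, zero_add, smul_zero]
  -- the S identity, in α-twisted form, from hM a b 0 c and hM a b 0 0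
  have hS2 : ∀ a b c, (μ a b (R₁.α c) + μ a b c) + (μ a c (R₁.α b) + μ a c b)
      + (μ b a (R₁.α c) + μ b a c) + (μ b c (R₁.α a) + μ b c a) = 0 := by
    intro a b c
    have e1 := hM a b 0 0
    have e2 := hM a b 0 c
    simp only [hθ, hstar, map_zero, add_zero, zero_add, map_add, hA2, hlin₁, hlin₂, hlin₃,
      hOM3, L1, L3, z1, z2, z3] at e1 e2
    rw [← sub_eq_zero] at e1 e2
    have e3 := congrArg₂ (· + ·) e1 e2
    simp only [add_zero] at e3
    rw [← e3, ← sub_eq_zero]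
    abel_nf
    simp only [ev2, evn2, ev4, evn4, ev6, evn6, ev8, evn8, ev10, evn10, ev12, evn12, ev14, evn14, ev16, evn16, ev18, evn18, ev20, evn20, ev22, evn22, ev24, evn24, neg_zero, add_zero, zero_add, smul_zero]
  -- the plain S identity
  have hS : ∀ a b c, (μ a b c + μ a c b) + (μ b a c + μ b c a) = 0 := by
    intro a b c
    apply fix0
    have h : R₂.α ((μ a b c + μ a c b) + (μ b a c + μ b c a))
        = μ a b (R₁.α c) + μ a c (R₁.α b) + (μ b a (R₁.α c) + μ b c (R₁.α a)) := by
      simp only [map_add, L3]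
    rw [h, ← hS2 a b c]
    abel
  have hswap : ∀ x y z, μ x y z + μ x z y = μ y x z + μ y z x := fun x y z =>
    heqz _ _ (hS x y z)
  -- symmetry in last two arguments
  have hsymm : ∀ a b c, μ a b c = μ a c b := by
    intro a b c
    have t1 : μ (R₁.α a) b c + μ (R₁.α a) c b
        = (μ a b (R₁.α c) + μ a c (R₁.α b)) + (μ a b c + μ a c b) := by
      rw [L1, L1]; abel
    have t2 : μ (R₁.α a) b c + μ (R₁.α a) c b = μ b (R₁.α a) c + μ b c (R₁.α a) :=
      hswap (R₁.α a) b c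
    have t3 : μ b (R₁.α a) c = μ b a (R₁.α c) := hOM3 b a c
    have t4 : μ b a (R₁.α c) + μ b c (R₁.α a) = R₂.α (μ b a c + μ b c a) := by
      rw [map_add, L3, L3]
    have t5 : μ b a c + μ b c a = μ a b c + μ a c b := (hswap a b c).symm
    have t6 : R₂.α (μ a b c + μ a c b) = μ a b (R₁.α c) + μ a c (R₁.α b) := by
      rw [map_add, L3, L3]
    have key : (μ a b (R₁.α c) + μ a c (R₁.α b)) + (μ a b c + μ a c b)
        = μ a b (R₁.α c) + μ a c (R₁.α b) := by
      rw [← t1, t2, t3, t4, t5, t6]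
    have h0 : μ a b c + μ a c b = 0 := add_eq_left.mp key
    exact heqz _ _ h0
  refine ⟨?_, hsymm⟩
  intro a b
  have e := hE1 a b
  have q1 : μ a a (R₁.α b) = μ a b (R₁.α a) := by
    rw [hsymm a a (R₁.α b), ← hOM3]
  have q2 : μ b a (R₁.α b) = μ b b (R₁.α a) := by
    rw [hsymm b a (R₁.α b), ← hOM3]
  have q3 : μ b a b = μ b b a := hsymm b a b
  rw [q1, q2, q3] at e
  rw [← sub_eq_zero]
  rw [← e, ← sub_eq_zero]
  abel_nf
  simp only [ev2, evn2, ev4, evn4, add_zero, zero_add]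
end

section
/- Let O be an Onoi ring. Define μ : (O²)³ → O by μ((a,b),(c,d),(u,v)) = b·(d·u). Then μ is an Onoi mapping from the direct square O² (with componentwise operations) to O. Moreover, if there exists e ∈ O with e·(e·e) ≠ 0, then μ violates the symmetry identity μ(x,y,z) = μ(x,z,y): indeed μ((0,e),(0,e),(e,0)) = e·(e·e) ≠ 0 = μ((0,e),(e,0),(0,e)). -/
lemma OnoiRing.mul_zero' {O : Type*} [AddCommGroup O] (R : OnoiRing O) (a : O) :
    R.mul a 0 = 0 := by
  have h := R.left_distrib a 0 0
  simpa using h.symm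

lemma OnoiRing.zero_mul' {O : Type*} [AddCommGroup O] (R : OnoiRing O) (a : O) :
    R.mul 0 a = 0 := by
  have h := R.right_distrib 0 0 a
  simpa using h.symm

theorem onoi_mapping_square {O : Type*} [AddCommGroup O] (R : OnoiRing O)
    (μ : O × O → O × O → O × O → O)
    (hμ : ∀ p q r : O × O, μ p q r = R.mul p.2 (R.mul q.2 r.1)) :
    ((∀ p₁ p₂ q r : O × O, μ (p₁ + p₂) q r = μ p₁ q r + μ p₂ q r) ∧
     (∀ p q₁ q₂ r : O × O, μ p (q₁ + q₂) r = μ p q₁ r + μ p q₂ r) ∧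
     (∀ p q r₁ r₂ : O × O, μ p q (r₁ + r₂) = μ p q r₁ + μ p q r₂) ∧
     (∀ p q r : O × O, μ (R.α p.1, R.α p.2) (R.α q.1, R.α q.2) (R.α r.1, R.α r.2)
        = R.α (μ p q r)) ∧
     (∀ p q r : O × O, μ (R.α p.1, R.α p.2) q r
        = μ p (R.α q.1, R.α q.2) (R.α r.1, R.α r.2)) ∧
     (∀ p q r : O × O, μ p (R.α q.1, R.α q.2) r = μ p q (R.α r.1, R.α r.2))) ∧
    (∀ e : O, R.mul e (R.mul e e) ≠ 0 →
      μ (0, e) (0, e) (e, 0) = R.mul e (R.mul e e) ∧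
      R.mul e (R.mul e e) ≠ 0 ∧
      μ (0, e) (e, 0) (0, e) = 0) := by
  refine ⟨⟨?_, ?_, ?_, ?_, ?_, ?_⟩, ?_⟩
  · intro p₁ p₂ q r
    simp [hμ, R.right_distrib]
  · intro p q₁ q₂ r
    simp [hμ, R.right_distrib, R.left_distrib]
  · intro p q r₁ r₂
    simp [hμ, R.left_distrib]
  · intro p q r
    simp [hμ, R.α_mul]
  · intro p q r
    simp only [hμ]
    rw [R.mul_α, ← R.α_mul]
  · intro p q r
    simp only [hμ, R.mul_α]
  · intro e he
    exact ⟨by simp [hμ], he, by simp [hμ, R.zero_mul', R.mul_zero']⟩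
end

section
/- Let A = Z_{2^{k₁}} × Z_{2^{k₂}} × ... × Z_{2^{kₙ}} with k₁ > k₂ ≥ ... ≥ kₙ ≥ 1 and n ≥ 2. Then for every automorphism ψ of A, the endomorphism 1-ψ is not bijective. -/
lemma key_mul {m : ℕ} (a : ZMod (2 ^ m)) (h : ((2 ^ (m - 1) : ℕ) : ZMod (2 ^ m)) * a ≠ 0) :
    ((2 ^ (m - 1) : ℕ) : ZMod (2 ^ m)) * a = ((2 ^ (m - 1) : ℕ) : ZMod (2 ^ m)) := by
  rcases Nat.eq_zero_or_pos m with hm0 | hmpos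
  · subst hm0
    haveI : Subsingleton (ZMod (2 ^ 0)) := by rw [pow_zero]; infer_instance
    exact absurd (Subsingleton.elim _ 0) h
  have : NeZero (2 ^ m) := ⟨by positivity⟩
  have ha : a = ((a.val : ℕ) : ZMod (2 ^ m)) := (ZMod.natCast_rightInverse a).symm
  set v := a.val with hv
  have hdecomp : 2 ^ (m - 1) * v = 2 ^ m * (v / 2) + 2 ^ (m - 1) * (v % 2) := by
    have h2 : v = 2 * (v / 2) + v % 2 := (Nat.div_add_mod v 2).symm.trans (by ring)
    obtain ⟨m', rfl⟩ : ∃ m', m = m' + 1 := ⟨m - 1, by omega⟩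
    simp only [Nat.succ_sub_one]
    calc 2 ^ m' * v = 2 ^ m' * (2 * (v / 2) + v % 2) := by rw [← h2]
      _ = 2 ^ (m' + 1) * (v / 2) + 2 ^ m' * (v % 2) := by ring
  have hcast : ((2 ^ (m - 1) : ℕ) : ZMod (2 ^ m)) * a
      = ((2 ^ (m - 1) * (v % 2) : ℕ) : ZMod (2 ^ m)) := by
    rw [ha, ← Nat.cast_mul, hdecomp, Nat.cast_add, Nat.cast_mul, ZMod.natCast_self,
      zero_mul, zero_add]
  rcases Nat.mod_two_eq_zero_or_one v with h0 | h1
  · exfalso; apply h; rw [hcast, h0]; simp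
  · rw [hcast, h1]; simp

theorem no_admissible_automorphism {n : ℕ} (hn : 2 ≤ n) (k : Fin n → ℕ)
    (hpos : ∀ i, 1 ≤ k i)
    (hanti : ∀ i j : Fin n, i ≤ j → k j ≤ k i)
    (hmax : ∀ i : Fin n, i ≠ ⟨0, by omega⟩ → k i < k ⟨0, by omega⟩)
    (ψ : (∀ i : Fin n, ZMod (2 ^ k i)) ≃+ (∀ i : Fin n, ZMod (2 ^ k i))) :
    ¬ Function.Bijective (fun x : ∀ i : Fin n, ZMod (2 ^ k i) => x - ψ x) := by
  intro hbij
  set i0 : Fin n := ⟨0, by omega⟩ with hi0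
  set m := k i0 with hm
  have hm1 : 1 ≤ m := hpos i0
  set e : ∀ i : Fin n, ZMod (2 ^ k i) := Pi.single i0 1 with he
  set x : ∀ i : Fin n, ZMod (2 ^ k i) := (2 ^ (m - 1)) • e with hx
  -- x at i0 is 2^(m-1), elsewhere 0
  have hxcoord : x i0 = ((2 ^ (m - 1) : ℕ) : ZMod (2 ^ m)) := by
    simp [hx, he, Pi.single_eq_same]
  have hxne : x ≠ 0 := by
    intro h
    have h0 : x i0 = 0 := by rw [h]; rfl
    rw [hxcoord] at h0
    have : NeZero (2 ^ m) := ⟨by positivity⟩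
    have := (ZMod.natCast_eq_zero_iff (2 ^ (m - 1)) (2 ^ m)).mp h0
    have := Nat.le_of_dvd (by positivity) this
    have : (2:ℕ) ^ m ≤ 2 ^ (m - 1) := this
    have hlt : (2:ℕ) ^ (m - 1) < 2 ^ m := Nat.pow_lt_pow_right (by norm_num) (by omega)
    omega
  -- off-diagonal coordinates of 2^(m-1) • anything vanish
  have hoff : ∀ (y : ∀ i : Fin n, ZMod (2 ^ k i)) (i : Fin n), i ≠ i0 →
      ((2 ^ (m - 1)) • y) i = 0 := by
    intro y i hi
    have hki : k i < m := hmax i hi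
    have : ((2 ^ (m - 1) : ℕ) : ZMod (2 ^ k i)) = 0 := by
      rw [ZMod.natCast_eq_zero_iff]
      exact pow_dvd_pow 2 (by omega)
    have : ((2 ^ (m - 1)) • y) i = ((2 ^ (m - 1) : ℕ) : ZMod (2 ^ k i)) * y i := by
      simp [Pi.smul_apply, nsmul_eq_mul]
    rw [this]
    simp [‹((2 ^ (m - 1) : ℕ) : ZMod (2 ^ k i)) = 0›]
  have hψx : ψ x = (2 ^ (m - 1)) • ψ e := by
    rw [hx, map_nsmul]
  -- ψ x at i0 is nonzero
  have hψx0ne : ψ x i0 ≠ 0 := by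
    intro h0
    have : ψ x = 0 := by
      funext i
      by_cases hi : i = i0
      · rw [hi]; exact h0
      · rw [hψx]; exact hoff (ψ e) i hi
    have := ψ.injective (this.trans (map_zero ψ).symm)
    exact hxne this
  have hψxx : ψ x = x := by
    funext i
    by_cases hi : i = i0
    · subst hi
      have h1 : ψ x i0 = ((2 ^ (m - 1) : ℕ) : ZMod (2 ^ m)) * (ψ e i0) := by
        rw [hψx]
        simp [Pi.smul_apply, nsmul_eq_mul]
      rw [h1, hxcoord]
      apply key_mul
      rw [← h1]
      exact hψx0ne
    · rw [hψx, hoff (ψ e) i hi]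
      rw [hx]
      exact (hoff e i hi).symm
  have := hbij.injective (a₁ := x) (a₂ := 0) (by simp [hψxx])
  exact hxne this
end
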